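/- Let X and Y be identically distributed real random variables with finite positive variance whose common CDF F is continuous and strictly increasing. If (X,Y) ∈ IC_r for some r ∈ [-1,1], then 0 ≤ r ≤ 1. -/

import Mathlib

open MeasureTheory ProbabilityTheory

open ENNReal

variable {Ω : Type*} [MeasurableSpace Ω]

noncomputable def cov (μ : Measure Ω) (X Y : Ω → ℝ) : ℝ :=
  ∫ ω, (X ω - ∫ a, X a ∂μ) * (Y ω - ∫ a, Y a ∂μ) ∂μ

noncomputable def corr (μ : Measure Ω) (X Y : Ω → ℝ) : ℝ :=
  cov μ X Y / Real.sqrt (variance X μ * variance Y μ)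

def Admissible (μ : Measure Ω) (X Y : Ω → ℝ) (g : ℝ → ℝ) : Prop :=
  Measurable g ∧ MemLp (g ∘ X) 2 μ ∧ MemLp (g ∘ Y) 2 μ ∧
    0 < variance (g ∘ X) μ ∧ 0 < variance (g ∘ Y) μ

def IC (μ : Measure Ω) (X Y : Ω → ℝ) (r : ℝ) : Prop :=
  corr μ X Y = r ∧ ∀ g : ℝ → ℝ, Admissible μ X Y g → corr μ (g ∘ X) (g ∘ Y) = r

lemma cov_eq_sub (μ : Measure Ω) [IsProbabilityMeasure μ] {f g : Ω → ℝ}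
    (hf : Integrable f μ) (hg : Integrable g μ)
    (hfg : Integrable (fun ω => f ω * g ω) μ) :
    cov μ f g = (∫ ω, f ω * g ω ∂μ) - (∫ ω, f ω ∂μ) * (∫ ω, g ω ∂μ) := by
  set a := ∫ ω, f ω ∂μ with ha
  set b := ∫ ω, g ω ∂μ with hb
  have h : ∀ ω, (f ω - a) * (g ω - b)
      = f ω * g ω - (b * f ω + (a * g ω - a * b)) := by intro ω; ring
  have h1 : Integrable (fun ω => b * f ω) μ := hf.const_mul b
  have h2 : Integrable (fun ω => a * g ω) μ := hg.const_mul a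
  have h3 : Integrable (fun ω => a * g ω - a * b) μ := h2.sub (integrable_const _)
  have h4 : Integrable (fun ω => b * f ω + (a * g ω - a * b)) μ := h1.add h3
  unfold cov
  rw [← ha, ← hb]
  calc ∫ ω, (f ω - a) * (g ω - b) ∂μ
      = ∫ ω, (f ω * g ω - (b * f ω + (a * g ω - a * b))) ∂μ := by simp_rw [h]
    _ = (∫ ω, f ω * g ω ∂μ) - ∫ ω, (b * f ω + (a * g ω - a * b)) ∂μ := integral_sub hfg h4
    _ = (∫ ω, f ω * g ω ∂μ) - a * b := by
        rw [integral_add h1 h3, integral_sub h2 (integrable_const _),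
          integral_const_mul, integral_const_mul, integral_const]
        simp [← ha, ← hb]
        ring

lemma indicator_key (μ : Measure Ω) [IsProbabilityMeasure μ]
    (X Y : Ω → ℝ) (hXm : Measurable X) (hYm : Measurable Y)
    (hident : ∀ x : ℝ, μ {ω | X ω ≤ x} = μ {ω | Y ω ≤ x})
    (r : ℝ) (hIC : IC μ X Y r) (t : ℝ)
    (h0 : 0 < (μ {ω | X ω ≤ t}).toReal) (h1 : (μ {ω | X ω ≤ t}).toReal < 1) :
    -(1 - (μ {ω | X ω ≤ t}).toReal) / (μ {ω | X ω ≤ t}).toReal ≤ r := by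
  classical
  set F : ℝ := (μ {ω | X ω ≤ t}).toReal with hFdef
  set g : ℝ → ℝ := fun x => if t < x then 1 else 0 with hgdef
  set A : Set Ω := {ω | t < X ω} with hAdef
  set B : Set Ω := {ω | t < Y ω} with hBdef
  have hAm : MeasurableSet A := hXm measurableSet_Ioi
  have hBm : MeasurableSet B := hYm measurableSet_Ioi
  have hXle : MeasurableSet {ω | X ω ≤ t} := hXm measurableSet_Iic
  have hYle : MeasurableSet {ω | Y ω ≤ t} := hYm measurableSet_Iic
  have hAc : A = {ω | X ω ≤ t}ᶜ := by ext ω; simp [hAdef, not_le]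
  have hBc : B = {ω | Y ω ≤ t}ᶜ := by ext ω; simp [hBdef, not_le]
  have hμA : μ A = 1 - μ {ω | X ω ≤ t} := by
    rw [hAc, prob_compl_eq_one_sub hXle]
  have hμB : μ B = μ A := by
    rw [hAc, hBc, prob_compl_eq_one_sub hXle, prob_compl_eq_one_sub hYle, hident]
  -- p = (μ A).toReal = 1 - F
  have hp : (μ A).toReal = 1 - F := by
    rw [hμA, ENNReal.toReal_sub_of_le prob_le_one ENNReal.one_ne_top, ENNReal.toReal_one]
  set p : ℝ := 1 - F with hpdef
  have hp0 : 0 < p := by simp [hpdef]; linarith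
  have hp1 : p < 1 := by simp [hpdef]; linarith
  -- g ∘ X is an indicator
  have hgX : g ∘ X = A.indicator (fun _ => (1:ℝ)) := by
    funext ω
    simp [hgdef, Set.indicator_apply, hAdef, Function.comp]
  have hgY : g ∘ Y = B.indicator (fun _ => (1:ℝ)) := by
    funext ω
    simp [hgdef, Set.indicator_apply, hBdef, Function.comp]
  have hgm : Measurable g := by
    apply Measurable.ite (measurableSet_Ioi) measurable_const measurable_const
  have hrange : ∀ z : ℝ, g z = 0 ∨ g z = 1 := by
    intro z; by_cases h : t < z <;> simp [hgdef, h]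
  have hbX : ∀ ω, ‖(g ∘ X) ω‖ ≤ 1 := by
    intro ω; rcases hrange (X ω) with h | h <;> simp [Function.comp, h]
  have hbY : ∀ ω, ‖(g ∘ Y) ω‖ ≤ 1 := by
    intro ω; rcases hrange (Y ω) with h | h <;> simp [Function.comp, h]
  have hmemX : MemLp (g ∘ X) 2 μ :=
    MemLp.of_bound ((hgm.comp hXm).aestronglyMeasurable) 1 (Filter.Eventually.of_forall hbX)
  have hmemY : MemLp (g ∘ Y) 2 μ :=
    MemLp.of_bound ((hgm.comp hYm).aestronglyMeasurable) 1 (Filter.Eventually.of_forall hbY)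
  -- integrals
  have hintX : ∫ ω, (g ∘ X) ω ∂μ = p := by
    rw [show (fun ω => (g ∘ X) ω) = g ∘ X from rfl, hgX, integral_indicator_const _ hAm]
    simp [measureReal_def, hp]
  have hintY : ∫ ω, (g ∘ Y) ω ∂μ = p := by
    rw [show (fun ω => (g ∘ Y) ω) = g ∘ Y from rfl, hgY, integral_indicator_const _ hBm]
    simp [measureReal_def, hμB, hp]
  -- squares
  have hsqX : (g ∘ X) ^ 2 = g ∘ X := by
    funext ω; rcases hrange (X ω) with h | h <;> simp [Function.comp, h]
  have hsqY : (g ∘ Y) ^ 2 = g ∘ Y := by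
    funext ω; rcases hrange (Y ω) with h | h <;> simp [Function.comp, h]
  have hvarX : variance (g ∘ X) μ = p * (1 - p) := by
    rw [variance_eq_sub hmemX, hsqX, hintX]; ring
  have hvarY : variance (g ∘ Y) μ = p * (1 - p) := by
    rw [variance_eq_sub hmemY, hsqY, hintY]; ring
  have hvpos : 0 < p * (1 - p) := mul_pos hp0 (by linarith)
  have hadm : Admissible μ X Y g :=
    ⟨hgm, hmemX, hmemY, by rw [hvarX]; exact hvpos, by rw [hvarY]; exact hvpos⟩
  have hcorr := hIC.2 g hadm
  -- compute corr
  have hsqrt : Real.sqrt (variance (g ∘ X) μ * variance (g ∘ Y) μ) = p * (1 - p) := by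
    rw [hvarX, hvarY, Real.sqrt_mul_self hvpos.le]
  -- cov bound
  have hintf : Integrable (g ∘ X) μ := hmemX.integrable one_le_two
  have hintg : Integrable (g ∘ Y) μ := hmemY.integrable one_le_two
  have hintfg : Integrable (fun ω => (g ∘ X) ω * (g ∘ Y) ω) μ :=
    hintg.bdd_mul ((hgm.comp hXm).aestronglyMeasurable) (c := 1) (Filter.Eventually.of_forall hbX)
  have hcov : cov μ (g ∘ X) (g ∘ Y) = (∫ ω, (g ∘ X) ω * (g ∘ Y) ω ∂μ) - p * p := by
    rw [cov_eq_sub μ hintf hintg hintfg, hintX, hintY]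
  have hnn : 0 ≤ ∫ ω, (g ∘ X) ω * (g ∘ Y) ω ∂μ := by
    apply integral_nonneg
    intro ω
    have h1 : 0 ≤ (g ∘ X) ω := by rcases hrange (X ω) with h | h <;> simp [Function.comp, h]
    have h2 : 0 ≤ (g ∘ Y) ω := by rcases hrange (Y ω) with h | h <;> simp [Function.comp, h]
    exact mul_nonneg h1 h2
  have hcovge : -(p * p) ≤ cov μ (g ∘ X) (g ∘ Y) := by rw [hcov]; linarith
  have hr' : r = cov μ (g ∘ X) (g ∘ Y) / (p * (1 - p)) := by
    rw [← hcorr]; unfold corr; rw [hsqrt]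
  have hdiv : -(p * p) / (p * (1 - p)) ≤ r := by
    rw [hr']
    exact (div_le_div_iff_of_pos_right hvpos).mpr hcovge
  have heq : -(p * p) / (p * (1 - p)) = -(1 - F) / F := by
    rw [hpdef]
    rw [div_eq_div_iff (_root_.mul_pos (by linarith) (by linarith)).ne' h0.ne']
    ring
  rw [heq] at hdiv
  exact hdiv

/-- If `X, Y` are identically distributed with a continuous, strictly
increasing common CDF, and `(X,Y) ∈ IC_r` for some `r ∈ [-1,1]`, then `0 ≤ r ≤ 1`. -/
theorem ic_nonneg_of_continuous_cdf
    (μ : Measure Ω) [IsProbabilityMeasure μ] (X Y : Ω → ℝ)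
    (hXm : Measurable X) (hYm : Measurable Y)
    (hX2 : MemLp X 2 μ) (hY2 : MemLp Y 2 μ)
    (hvX : 0 < variance X μ) (hvY : 0 < variance Y μ)
    (hident : ∀ x : ℝ, μ {ω | X ω ≤ x} = μ {ω | Y ω ≤ x})
    (hcont : Continuous fun x : ℝ => (μ {ω | X ω ≤ x}).toReal)
    (hmono : StrictMono fun x : ℝ => (μ {ω | X ω ≤ x}).toReal)
    (r : ℝ) (hr : r ∈ Set.Icc (-1 : ℝ) 1) (hIC : IC μ X Y r) :
    0 ≤ r ∧ r ≤ 1 := by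
  obtain ⟨hrlo, hrhi⟩ := hr
  refine ⟨?_, hrhi⟩
  set F : ℝ → ℝ := fun x => (μ {ω | X ω ≤ x}).toReal with hFdef
  have hFle1 : ∀ x, F x ≤ 1 := by
    intro x
    have h := prob_le_one (μ := μ) (s := {ω | X ω ≤ x})
    calc F x ≤ (1 : ℝ≥0∞).toReal := ENNReal.toReal_mono ENNReal.one_ne_top h
    _ = 1 := ENNReal.toReal_one
  have hF01 : ∀ x, 0 < F x ∧ F x < 1 := by
    intro x
    constructor
    · have h := hmono (show x - 1 < x by linarith)
      have h2 : (0:ℝ) ≤ F (x-1) := ENNReal.toReal_nonneg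
      exact lt_of_le_of_lt h2 h
    · have h := hmono (show x < x + 1 by linarith)
      exact lt_of_lt_of_le h (hFle1 _)
  -- F tends to 1: for any c < 1 there is n with F n > c
  have hsup : ∀ c : ℝ, c < 1 → ∃ n : ℕ, c < F n := by
    intro c hc
    by_cases hc0 : c < 0
    · exact ⟨0, lt_of_lt_of_le hc0 ENNReal.toReal_nonneg⟩
    push_neg at hc0
    have hmonoS : Monotone (fun n : ℕ => {ω | X ω ≤ (n:ℝ)}) := by
      intro n m hnm ω hω
      exact le_trans hω ((Nat.cast_le (α := ℝ)).mpr hnm)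
    have hUnion : (⋃ n : ℕ, {ω | X ω ≤ (n:ℝ)}) = Set.univ := by
      ext ω
      simp only [Set.mem_iUnion, Set.mem_univ, iff_true, Set.mem_setOf_eq]
      exact exists_nat_ge (X ω)
    have hiSup : (⨆ n : ℕ, μ {ω | X ω ≤ (n:ℝ)}) = 1 := by
      rw [← hmonoS.measure_iUnion, hUnion, measure_univ]
    have hlt : ENNReal.ofReal c < ⨆ n : ℕ, μ {ω | X ω ≤ (n:ℝ)} := by
      rw [hiSup]
      exact ENNReal.ofReal_lt_one.mpr hc
    obtain ⟨n, hn⟩ := lt_iSup_iff.mp hlt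
    refine ⟨n, ?_⟩
    have hne : μ {ω | X ω ≤ (n:ℝ)} ≠ ⊤ := measure_ne_top μ _
    have := (ENNReal.ofReal_lt_iff_lt_toReal hc0 hne).mp hn
    exact this
  by_contra hneg
  push_neg at hneg
  -- choose n with F n > 1/(1-r)
  have h1r : (1:ℝ) < 1 - r := by linarith
  have hc1 : (1:ℝ)/(1-r) < 1 := by
    rw [div_lt_one (by linarith)]
    linarith
  obtain ⟨n, hn⟩ := hsup (1/(1-r)) hc1
  obtain ⟨hF0, hF1⟩ := hF01 n
  have hkey := indicator_key μ X Y hXm hYm hident r hIC n hF0 hF1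
  have hkey' : -(1 - F n) / F n ≤ r := hkey
  have h2 : -(1 - F n) ≤ r * F n := (div_le_iff₀ hF0).mp hkey'
  have h4 : 1 < F n * (1 - r) := (div_lt_iff₀ (by linarith : (0:ℝ) < 1 - r)).mp hn
  nlinarith
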